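/- Let F : T → T' be a triangle functor between triangulated categories and T an object of T. If the induced map F : Hom_T(T, T[n]) → Hom_{T'}(F(T), F(T)[n]) is an isomorphism for every integer n, then the restriction of F to the smallest thick subcategory thick_T(T) of T containing T is fully faithful. -/

import Mathlib

open CategoryTheory CategoryTheory.Limits CategoryTheory.Pretriangulated

variable {C : Type*} [Category C] [HasZeroObject C] [HasShift C ℤ]
  [Preadditive C] [∀ n : ℤ, (shiftFunctor C n).Additive] [Pretriangulated C]

/-- The smallest thick subcategory of a (pre)triangulated category containing a
class `S` of objects. -/
inductive thickClosure (S : Set C) : C → Prop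
  | base {X : C} : X ∈ S → thickClosure S X
  | zero {X : C} : IsZero X → thickClosure S X
  | iso {X Y : C} : (X ≅ Y) → thickClosure S X → thickClosure S Y
  | shift {X : C} (n : ℤ) : thickClosure S X → thickClosure S (X⟦n⟧)
  | cone {Tr : Triangle C} : (Tr ∈ distTriang C) → thickClosure S Tr.obj₁ →
      thickClosure S Tr.obj₂ → thickClosure S Tr.obj₃
  | summand {X Y : C} : thickClosure S X →
      (∃ (s : Y ⟶ X) (r : X ⟶ Y), s ≫ r = 𝟙 Y) → thickClosure S Y

section Aux
set_option linter.unusedSectionVars false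

variable {D : Type*} [Category D] [HasZeroObject D] [HasShift D ℤ]
  [Preadditive D] [∀ n : ℤ, (shiftFunctor D n).Additive] [Pretriangulated D]
  (F : C ⥤ D) [F.CommShift ℤ] [F.IsTriangulated]

/-- `F` induces a bijection `Hom(X, Y) → Hom(F X, F Y)`. -/
def BijOn (X Y : C) : Prop := Function.Bijective (fun f : X ⟶ Y => F.map f)

variable {F}

lemma BijOn.map_eq_zero_iff {X Y : C} (h : BijOn F X Y) {f : X ⟶ Y}
    (hf : F.map f = 0) : f = 0 := by
  apply h.1
  simpa using hf

lemma BijOn.src_iso {X X' Y : C} (e : X ≅ X') (h : BijOn F X Y) : BijOn F X' Y := by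
  constructor
  · intro f g hfg
    simp only at hfg
    have : e.hom ≫ f = e.hom ≫ g := h.1 (by simp [hfg])
    simpa using congrArg (fun t => e.inv ≫ t) this
  · intro φ
    obtain ⟨f, hf⟩ := h.2 (F.map e.hom ≫ φ)
    simp only at hf
    refine ⟨e.inv ≫ f, ?_⟩
    simp [hf, ← F.map_comp_assoc]

lemma BijOn.tgt_iso {X Y Y' : C} (e : Y ≅ Y') (h : BijOn F X Y) : BijOn F X Y' := by
  constructor
  · intro f g hfg
    simp only at hfg
    have : f ≫ e.inv = g ≫ e.inv := h.1 (by simp [hfg])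
    simpa using congrArg (fun t => t ≫ e.hom) this
  · intro φ
    obtain ⟨f, hf⟩ := h.2 (φ ≫ F.map e.inv)
    simp only at hf
    refine ⟨f ≫ e.hom, ?_⟩
    simp [hf]

lemma BijOn.shift {X Y : C} (h : BijOn F X Y) (n : ℤ) : BijOn F (X⟦n⟧) (Y⟦n⟧) := by
  have key : ∀ f : X⟦n⟧ ⟶ Y⟦n⟧, ∀ g : X ⟶ Y, f = g⟦n⟧' →
      F.map f = (F.commShiftIso n).hom.app X ≫ (F.map g)⟦n⟧' ≫ (F.commShiftIso n).inv.app Y := by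
    intro f g hg
    subst hg
    rw [← Functor.commShiftIso_hom_naturality_assoc]
    simp
  constructor
  · intro f g hfg
    simp only at hfg
    obtain ⟨f', rfl⟩ := (shiftFunctor C n).map_surjective f
    obtain ⟨g', rfl⟩ := (shiftFunctor C n).map_surjective g
    rw [key _ f' rfl, key _ g' rfl] at hfg
    simp only [cancel_epi, cancel_mono] at hfg
    have := h.1 ((shiftFunctor D n).map_injective hfg)
    rw [this]
  · intro φ
    obtain ⟨χ, hχ⟩ := (shiftFunctor D n).map_surjective
      ((F.commShiftIso n).inv.app X ≫ φ ≫ (F.commShiftIso n).hom.app Y)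
    obtain ⟨g, hg⟩ := h.2 χ
    simp only at hg
    refine ⟨g⟦n⟧', ?_⟩
    simp only [key _ g rfl, hg, hχ]
    simp

lemma BijOn.zero_src {X Y : C} (hX : IsZero X) : BijOn F X Y := by
  have hFX : IsZero (F.obj X) := F.map_isZero hX
  exact ⟨fun f g _ => hX.eq_of_src f g, fun φ => ⟨0, hFX.eq_of_src _ φ⟩⟩

lemma BijOn.zero_tgt {X Y : C} (hY : IsZero Y) : BijOn F X Y := by
  have hFY : IsZero (F.obj Y) := F.map_isZero hY
  exact ⟨fun f g _ => hY.eq_of_tgt f g, fun φ => ⟨0, hFY.eq_of_tgt _ φ⟩⟩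

lemma BijOn.retract_src {X Y Z : C} (s : Y ⟶ X) (r : X ⟶ Y) (hsr : s ≫ r = 𝟙 Y)
    (h : BijOn F X Z) : BijOn F Y Z := by
  constructor
  · intro f g hfg
    simp only at hfg
    have : r ≫ f = r ≫ g := h.1 (by simp [hfg])
    have := congrArg (fun t => s ≫ t) this
    simpa [reassoc_of% hsr, hsr] using this
  · intro φ
    obtain ⟨f, hf⟩ := h.2 (F.map r ≫ φ)
    simp only at hf
    refine ⟨s ≫ f, ?_⟩
    simp only [F.map_comp, hf, ← Category.assoc, ← F.map_comp, hsr]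
    simp

lemma BijOn.retract_tgt {X Y Z : C} (s : Y ⟶ X) (r : X ⟶ Y) (hsr : s ≫ r = 𝟙 Y)
    (h : BijOn F Z X) : BijOn F Z Y := by
  constructor
  · intro f g hfg
    simp only at hfg
    have : f ≫ s = g ≫ s := h.1 (by simp [hfg])
    have := congrArg (fun t => t ≫ r) this
    simpa [Category.assoc, hsr] using this
  · intro φ
    obtain ⟨f, hf⟩ := h.2 (φ ≫ F.map s)
    simp only at hf
    refine ⟨f ≫ r, ?_⟩
    simp only [F.map_comp, hf, Category.assoc, ← F.map_comp, hsr]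
    simp

/-- Five-lemma-style argument, covariant version. -/
lemma core_cov (Tr : Triangle C) (hTr : Tr ∈ distTriang C) (A : C)
    (h₀ : BijOn F A Tr.obj₁) (h₁ : BijOn F A Tr.obj₂)
    (h₂ : BijOn F A (Tr.obj₁⟦(1 : ℤ)⟧)) (h₃ : BijOn F A (Tr.obj₂⟦(1 : ℤ)⟧)) :
    BijOn F A Tr.obj₃ := by
  have hTr' := F.map_distinguished Tr hTr
  constructor
  · intro f g hfg
    simp only at hfg
    rw [← sub_eq_zero]
    set d := f - g with hd_def
    have hd : F.map d = 0 := by rw [F.map_sub, hfg, sub_self]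
    have h5 : d ≫ Tr.mor₃ = 0 := h₂.map_eq_zero_iff (by rw [F.map_comp, hd, zero_comp])
    obtain ⟨e, he⟩ := Pretriangulated.Triangle.coyoneda_exact₃ Tr hTr d h5
    have he' : F.map e ≫ (F.mapTriangle.obj Tr).mor₂ = 0 := by
      change F.map e ≫ F.map Tr.mor₂ = 0
      rw [← F.map_comp, ← he, hd]
    obtain ⟨ξ, hξ⟩ := Pretriangulated.Triangle.coyoneda_exact₂ _ hTr' (F.map e) he'
    obtain ⟨η, hη⟩ := h₀.2 ξ
    simp only at hη
    have he0 : e = η ≫ Tr.mor₁ := by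
      apply h₁.1
      simp only [F.map_comp, hη]
      exact hξ
    rw [he, he0, Category.assoc, comp_distTriang_mor_zero₁₂ Tr hTr, comp_zero]
  · intro φ
    obtain ⟨u, hu⟩ := h₂.2 (φ ≫ F.map Tr.mor₃)
    simp only at hu
    have hu0 : u ≫ Tr.mor₁⟦(1 : ℤ)⟧' = 0 := by
      apply h₃.map_eq_zero_iff
      rw [F.map_comp, hu, Category.assoc, ← F.map_comp,
        comp_distTriang_mor_zero₃₁ Tr hTr, F.map_zero, comp_zero]
    obtain ⟨v, hv⟩ := Pretriangulated.Triangle.coyoneda_exact₁ Tr hTr u hu0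
    have hz : (φ - F.map v) ≫ (F.mapTriangle.obj Tr).mor₃ = 0 := by
      change (φ - F.map v) ≫ (F.map Tr.mor₃ ≫ (F.commShiftIso (1 : ℤ)).hom.app Tr.obj₁) = 0
      rw [← Category.assoc, Preadditive.sub_comp, ← F.map_comp, ← hv, hu, sub_self, zero_comp]
    obtain ⟨w, hw⟩ := Pretriangulated.Triangle.coyoneda_exact₃ _ hTr' (φ - F.map v) hz
    obtain ⟨t, ht⟩ := h₁.2 w
    simp only at ht
    refine ⟨v + t ≫ Tr.mor₂, ?_⟩
    have : w ≫ (F.mapTriangle.obj Tr).mor₂ = φ - F.map v := hw.symm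
    change (w : F.obj A ⟶ F.obj Tr.obj₂) ≫ F.map Tr.mor₂ = φ - F.map v at this
    show F.map (v + t ≫ Tr.mor₂) = φ
    erw [F.map_add, F.map_comp, ht, this]
    abel

/-- Five-lemma-style argument, contravariant version. -/
lemma core_contra (Tr : Triangle C) (hTr : Tr ∈ distTriang C) (B : C)
    (h₀ : BijOn F Tr.obj₁ B) (h₁ : BijOn F Tr.obj₂ B)
    (h₂ : BijOn F (Tr.obj₁⟦(1 : ℤ)⟧) B) (h₃ : BijOn F (Tr.obj₂⟦(1 : ℤ)⟧) B) :
    BijOn F Tr.obj₃ B := by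
  have hTr' := F.map_distinguished Tr hTr
  constructor
  · intro f g hfg
    simp only at hfg
    rw [← sub_eq_zero]
    set d := f - g with hd_def
    have hd : F.map d = 0 := by rw [F.map_sub, hfg, sub_self]
    have h5 : Tr.mor₂ ≫ d = 0 := h₁.map_eq_zero_iff (by rw [F.map_comp, hd, comp_zero])
    obtain ⟨e, he⟩ := Pretriangulated.Triangle.yoneda_exact₃ Tr hTr d h5
    have hx : (F.mapTriangle.obj Tr).mor₃ ≫
        ((F.commShiftIso (1 : ℤ)).inv.app Tr.obj₁ ≫ F.map e) = 0 := by
      change (F.map Tr.mor₃ ≫ (F.commShiftIso (1 : ℤ)).hom.app Tr.obj₁) ≫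
        ((F.commShiftIso (1 : ℤ)).inv.app Tr.obj₁ ≫ F.map e) = 0
      rw [Category.assoc, Iso.hom_inv_id_app_assoc, ← F.map_comp, ← he, hd]
    obtain ⟨y, hy⟩ := Pretriangulated.Triangle.yoneda_exact₃
      ((F.mapTriangle.obj Tr).rotate) (rot_of_distTriang _ hTr') _ hx
    change (F.commShiftIso (1 : ℤ)).inv.app Tr.obj₁ ≫ F.map e =
      (-(F.map Tr.mor₁)⟦(1 : ℤ)⟧') ≫ y at hy
    obtain ⟨w, hwF⟩ := h₃.2 ((F.commShiftIso (1 : ℤ)).hom.app Tr.obj₂ ≫ y)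
    simp only at hwF
    have hFe : F.map e =
        (F.commShiftIso (1 : ℤ)).hom.app Tr.obj₁ ≫
          ((F.commShiftIso (1 : ℤ)).inv.app Tr.obj₁ ≫ F.map e) := by
      rw [Iso.hom_inv_id_app_assoc]
    have h6 : F.map (Tr.mor₁⟦(1 : ℤ)⟧' ≫ w) =
        (F.commShiftIso (1 : ℤ)).hom.app Tr.obj₁ ≫ (F.map Tr.mor₁)⟦(1 : ℤ)⟧' ≫ y := by
      erw [F.map_comp, hwF, Functor.commShiftIso_hom_naturality_assoc]
    have key : F.map (e + Tr.mor₁⟦(1 : ℤ)⟧' ≫ w) = 0 := by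
      erw [F.map_add, h6, hFe, hy]
      erw [Preadditive.neg_comp, Preadditive.comp_neg, neg_add_cancel]
    have he0 : e = -(Tr.mor₁⟦(1 : ℤ)⟧' ≫ w) :=
      eq_neg_of_add_eq_zero_left (h₂.map_eq_zero_iff key)
    rw [he, he0, Preadditive.comp_neg, ← Category.assoc,
      comp_distTriang_mor_zero₃₁ Tr hTr, zero_comp, neg_zero]
  · intro φ
    obtain ⟨p, hp⟩ := h₁.2 (F.map Tr.mor₂ ≫ φ)
    simp only at hp
    have hp0 : Tr.mor₁ ≫ p = 0 := h₀.map_eq_zero_iff (by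
      rw [F.map_comp, hp, ← Category.assoc, ← F.map_comp,
        comp_distTriang_mor_zero₁₂ Tr hTr, F.map_zero, zero_comp])
    obtain ⟨q, hq⟩ := Pretriangulated.Triangle.yoneda_exact₂ Tr hTr p hp0
    have hz2 : (F.mapTriangle.obj Tr).mor₂ ≫ (φ - F.map q) = 0 := by
      change F.map Tr.mor₂ ≫ (φ - F.map q) = 0
      rw [Preadditive.comp_sub, ← hp, ← F.map_comp, ← hq, sub_self]
    obtain ⟨r, hr⟩ := Pretriangulated.Triangle.yoneda_exact₃ _ hTr' (φ - F.map q) hz2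
    obtain ⟨s, hs⟩ := h₂.2 ((F.commShiftIso (1 : ℤ)).hom.app Tr.obj₁ ≫ r)
    simp only at hs
    refine ⟨q + Tr.mor₃ ≫ s, ?_⟩
    show F.map (q + Tr.mor₃ ≫ s) = φ
    change φ - F.map q = (F.map Tr.mor₃ ≫ (F.commShiftIso (1 : ℤ)).hom.app Tr.obj₁) ≫ r at hr
    erw [F.map_add, F.map_comp, hs, ← Category.assoc, ← hr]
    abel

/-- The predicate: `F` is bijective on all shifted hom groups from `X` to `Y`. -/
def PShift (F : C ⥤ D) (X Y : C) : Prop := ∀ a b : ℤ, BijOn F (X⟦a⟧) (Y⟦b⟧)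

lemma PShift.src_iso {X X' Y : C} (e : X ≅ X') (h : PShift F X Y) : PShift F X' Y :=
  fun a b => (h a b).src_iso ((shiftFunctor C a).mapIso e)

lemma PShift.tgt_iso {X Y Y' : C} (e : Y ≅ Y') (h : PShift F X Y) : PShift F X Y' :=
  fun a b => (h a b).tgt_iso ((shiftFunctor C b).mapIso e)

lemma PShift.src_shift {X Y : C} (n : ℤ) (h : PShift F X Y) : PShift F (X⟦n⟧) Y :=
  fun a b => (h (n + a) b).src_iso ((shiftFunctorAdd C n a).app X)

lemma PShift.tgt_shift {X Y : C} (n : ℤ) (h : PShift F X Y) : PShift F X (Y⟦n⟧) :=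
  fun a b => (h a (n + b)).tgt_iso ((shiftFunctorAdd C n b).app Y)

lemma PShift.src_zero {X Y : C} (hX : IsZero X) : PShift F X Y :=
  fun a _ => BijOn.zero_src ((shiftFunctor C a).map_isZero hX)

lemma PShift.tgt_zero {X Y : C} (hY : IsZero Y) : PShift F X Y :=
  fun _ b => BijOn.zero_tgt ((shiftFunctor C b).map_isZero hY)

lemma PShift.src_retract {X Y Z : C} (s : Y ⟶ X) (r : X ⟶ Y) (hsr : s ≫ r = 𝟙 Y)
    (h : PShift F X Z) : PShift F Y Z :=
  fun a b => (h a b).retract_src (s⟦a⟧') (r⟦a⟧')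
    (by rw [← Functor.map_comp, hsr, CategoryTheory.Functor.map_id])

lemma PShift.tgt_retract {X Y Z : C} (s : Y ⟶ X) (r : X ⟶ Y) (hsr : s ≫ r = 𝟙 Y)
    (h : PShift F Z X) : PShift F Z Y :=
  fun a b => (h a b).retract_tgt (s⟦b⟧') (r⟦b⟧')
    (by rw [← Functor.map_comp, hsr, CategoryTheory.Functor.map_id])

lemma PShift.tgt_cone (Tr : Triangle C) (hTr : Tr ∈ distTriang C) {X : C}
    (h₁ : PShift F X Tr.obj₁) (h₂ : PShift F X Tr.obj₂) : PShift F X Tr.obj₃ := by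
  intro a b
  have hTb := Pretriangulated.Triangle.shift_distinguished Tr hTr b
  exact core_cov ((CategoryTheory.shiftFunctor (Triangle C) b).obj Tr) hTb (X⟦a⟧)
    (h₁ a b) (h₂ a b)
    ((h₁ a (b + 1)).tgt_iso ((shiftFunctorAdd C b 1).app Tr.obj₁))
    ((h₂ a (b + 1)).tgt_iso ((shiftFunctorAdd C b 1).app Tr.obj₂))

lemma PShift.src_cone (Tr : Triangle C) (hTr : Tr ∈ distTriang C) {Y : C}
    (h₁ : PShift F Tr.obj₁ Y) (h₂ : PShift F Tr.obj₂ Y) : PShift F Tr.obj₃ Y := by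
  intro a b
  have hTa := Pretriangulated.Triangle.shift_distinguished Tr hTr a
  exact core_contra ((CategoryTheory.shiftFunctor (Triangle C) a).obj Tr) hTa (Y⟦b⟧)
    (h₁ a b) (h₂ a b)
    ((h₁ (a + 1) b).src_iso ((shiftFunctorAdd C a 1).app Tr.obj₁))
    ((h₂ (a + 1) b).src_iso ((shiftFunctorAdd C a 1).app Tr.obj₂))

lemma postcomp_bij {X Y Y' : D} (e : Y ≅ Y') :
    Function.Bijective (fun g : X ⟶ Y => g ≫ e.hom) :=
  ⟨fun f g hfg => by simpa using congrArg (fun t => t ≫ e.inv) hfg,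
   fun g => ⟨g ≫ e.inv, by simp⟩⟩

lemma PShift.self {T : C}
    (h : ∀ n : ℤ, Function.Bijective
      (fun f : T ⟶ T⟦n⟧ => F.map f ≫ (F.commShiftIso n).hom.app T)) :
    PShift F T T := by
  have base : ∀ n : ℤ, BijOn F T (T⟦n⟧) := by
    intro n
    have : (fun f : T ⟶ T⟦n⟧ => F.map f) =
        (fun g : F.obj T ⟶ (F.obj T)⟦n⟧ => g ≫ (F.commShiftIso n).inv.app T) ∘
          (fun f : T ⟶ T⟦n⟧ => F.map f ≫ (F.commShiftIso n).hom.app T) := by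
      funext f
      simp
    rw [BijOn, this]
    exact (postcomp_bij ((F.commShiftIso n).app T).symm).comp (h n)
  intro a b
  exact ((base (b - a)).shift a).tgt_iso
    (((shiftFunctorAdd' C (b - a) a b (by ring)).app T).symm)

end Aux

theorem stmt3
    {D : Type*} [Category D] [HasZeroObject D] [HasShift D ℤ]
    [Preadditive D] [∀ n : ℤ, (shiftFunctor D n).Additive] [Pretriangulated D]
    (F : C ⥤ D) [F.CommShift ℤ] [F.IsTriangulated] (T : C)
    (h : ∀ n : ℤ, Function.Bijective
      (fun f : T ⟶ T⟦n⟧ => F.map f ≫ (F.commShiftIso n).hom.app T)) :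
    ∀ X Y : C, thickClosure {T} X → thickClosure {T} Y →
      Function.Bijective (fun f : X ⟶ Y => F.map f) := by
  have key : ∀ X : C, thickClosure {T} X → ∀ Y : C, thickClosure {T} Y → PShift F X Y := by
    intro X hX
    induction hX with
    | base hmem =>
      rw [Set.mem_singleton_iff] at hmem
      subst hmem
      intro Y hY
      induction hY with
      | base hm =>
        rw [Set.mem_singleton_iff] at hm
        subst hm
        exact PShift.self h
      | zero hz => exact PShift.tgt_zero hz
      | iso e _ ih => exact ih.tgt_iso e
      | shift n _ ih => exact ih.tgt_shift n
      | cone hdt _ _ ih₁ ih₂ => exact PShift.tgt_cone _ hdt ih₁ ih₂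
      | summand _ hs ih =>
        obtain ⟨s, r, hsr⟩ := hs
        exact ih.tgt_retract s r hsr
    | zero hz => intro Y hY; exact PShift.src_zero hz
    | iso e _ ih => intro Y hY; exact (ih Y hY).src_iso e
    | shift n _ ih => intro Y hY; exact (ih Y hY).src_shift n
    | cone hdt _ _ ih₁ ih₂ =>
      intro Y hY
      exact PShift.src_cone _ hdt (ih₁ Y hY) (ih₂ Y hY)
    | summand _ hs ih =>
      intro Y hY
      obtain ⟨s, r, hsr⟩ := hs
      exact (ih Y hY).src_retract s r hsr
  intro X Y hX hY
  have hb : BijOn F (X⟦(0 : ℤ)⟧) (Y⟦(0 : ℤ)⟧) := key X hX Y hY 0 0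
  exact (hb.src_iso ((shiftFunctorZero C ℤ).app X)).tgt_iso ((shiftFunctorZero C ℤ).app Y)
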